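/- arXiv:math/9501201 — 6 statements merged into one kernel-verified Lean document; each statement's English description precedes it below -/
import Mathlib

section
/- For all W, Y ∈ 𝒟, the composition U_W ∘ U_Y is an affine map on 𝒟: setting X = (CY+D)⁻¹C, one has U_W(U_Y(Z)) = U_W(Y) + (I+(W−Y)X)(Z−Y)(I+X(W−Y)) for every Z ∈ 𝒟, where U_Y(Z) = Y − (Z−Y)(CZ+D)⁻¹(CY+D). -/
open ContinuousLinearMap Set

set_option synthInstance.maxHeartbeats 1000000
set_option maxHeartbeats 1000000

/-- The linear fractional transformation `U_W(A) = W − (A−W)(CA+D)⁻¹(CW+D)`, defined on the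
ambient space `ℒ(H,K)`. -/
noncomputable def lftSymm {H K : Type*}
    [NormedAddCommGroup H] [InnerProductSpace ℂ H] [CompleteSpace H]
    [NormedAddCommGroup K] [InnerProductSpace ℂ K] [CompleteSpace K]
    (C : K →L[ℂ] H) (D : H →L[ℂ] H) (W A : H →L[ℂ] K) : H →L[ℂ] K :=
  W - (A - W).comp ((Ring.inverse (C.comp A + D)).comp (C.comp W + D))

private lemma ring_inverse_eq' {R : Type*} [Ring R] {a b : R} (ha : IsUnit a)
    (h1 : a * b = 1) : Ring.inverse a = b := by
  calc Ring.inverse a = Ring.inverse a * (a * b) := by rw [h1, mul_one]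
    _ = b := by rw [← mul_assoc, Ring.inverse_mul_cancel a ha, one_mul]

lemma lftSymm_comp_key {H K : Type*}
    [NormedAddCommGroup H] [InnerProductSpace ℂ H] [CompleteSpace H]
    [NormedAddCommGroup K] [InnerProductSpace ℂ K] [CompleteSpace K]
    (C : K →L[ℂ] H) (D : H →L[ℂ] H) (Wv Yv Zv : H →L[ℂ] K)
    (hW : IsUnit (C.comp Wv + D)) (hY : IsUnit (C.comp Yv + D))
    (hZ : IsUnit (C.comp Zv + D)) :
    lftSymm C D Wv (lftSymm C D Yv Zv) =
      lftSymm C D Wv Yv +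
        ((ContinuousLinearMap.id ℂ K +
            (Wv - Yv).comp ((Ring.inverse (C.comp Yv + D)).comp C)).comp
          (Zv - Yv)).comp
            (ContinuousLinearMap.id ℂ H +
              (((Ring.inverse (C.comp Yv + D)).comp C).comp (Wv - Yv))) := by
  set TW := C.comp Wv + D with hTW
  set TY := C.comp Yv + D with hTY
  set TZ := C.comp Zv + D with hTZ
  set iY := Ring.inverse TY with hiY
  set iZ := Ring.inverse TZ with hiZ
  -- basic cancellation facts
  have cYY : TY * iY = 1 := Ring.mul_inverse_cancel TY hY
  have cYY' : iY * TY = 1 := Ring.inverse_mul_cancel TY hY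
  have cZZ : TZ * iZ = 1 := Ring.mul_inverse_cancel TZ hZ
  have cZZ' : iZ * TZ = 1 := Ring.inverse_mul_cancel TZ hZ
  -- bare cancellation lemmas (comp form)
  have bYY : iY.comp TY = ContinuousLinearMap.id ℂ H := by
    rw [← mul_def, cYY', one_def]
  have bYY2 : TY.comp iY = ContinuousLinearMap.id ℂ H := by
    rw [← mul_def, cYY, one_def]
  have bZZ : iZ.comp TZ = ContinuousLinearMap.id ℂ H := by
    rw [← mul_def, cZZ', one_def]
  have bZZ2 : TZ.comp iZ = ContinuousLinearMap.id ℂ H := by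
    rw [← mul_def, cZZ, one_def]
  -- with-continuation cancellation lemmas (comp form)
  have lTYiY : ∀ f : H →L[ℂ] H, TY.comp (iY.comp f) = f := fun f => by
    rw [← comp_assoc, bYY2, id_comp]
  have liYTY : ∀ f : H →L[ℂ] H, iY.comp (TY.comp f) = f := fun f => by
    rw [← comp_assoc, bYY, id_comp]
  have lTZiZ : ∀ f : H →L[ℂ] H, TZ.comp (iZ.comp f) = f := fun f => by
    rw [← comp_assoc, bZZ2, id_comp]
  have liZTZ : ∀ f : H →L[ℂ] H, iZ.comp (TZ.comp f) = f := fun f => by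
    rw [← comp_assoc, bZZ, id_comp]
  -- rewriting C ∘ X
  have hcW : C.comp Wv = TW - D := by rw [hTW]; abel
  have hcY : C.comp Yv = TY - D := by rw [hTY]; abel
  have hcZ : C.comp Zv = TZ - D := by rw [hTZ]; abel
  have hcW' : ∀ f : H →L[ℂ] H, C.comp (Wv.comp f) = (TW - D).comp f := fun f => by
    rw [← comp_assoc, hcW]
  have hcY' : ∀ f : H →L[ℂ] H, C.comp (Yv.comp f) = (TY - D).comp f := fun f => by
    rw [← comp_assoc, hcY]
  have hcZ' : ∀ f : H →L[ℂ] H, C.comp (Zv.comp f) = (TZ - D).comp f := fun f => by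
    rw [← comp_assoc, hcZ]
  -- the key computation: C ∘ U_Y(Z) + D = TY * iZ * TY
  have hCA : C.comp (lftSymm C D Yv Zv) + D = TY * (iZ * TY) := by
    simp only [lftSymm, comp_sub, sub_comp, comp_add, add_comp, ← hiZ, ← hTY]
    rw [hcZ' (iZ.comp TY), hcY' (iZ.comp TY)]
    simp only [sub_comp, ← mul_def, ← hTY]
    rw [hcY, show (TZ - D) * (iZ * TY) = TY - D * (iZ * TY) from by
        rw [sub_mul, ← mul_assoc, cZZ, one_mul],
      sub_mul TY D (iZ * TY)]
    abel
  have hUA : IsUnit (C.comp (lftSymm C D Yv Zv) + D) := by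
    rw [hCA]
    exact hY.mul ((isUnit_ringInverse.mpr hZ).mul hY)
  have hiA : Ring.inverse (C.comp (lftSymm C D Yv Zv) + D) = iY * (TZ * iY) := by
    refine ring_inverse_eq' hUA ?_
    rw [hCA]
    calc TY * (iZ * TY) * (iY * (TZ * iY))
        = TY * (iZ * ((TY * iY) * (TZ * iY))) := by noncomm_ring
      _ = 1 := by
          rw [cYY, one_mul, show iZ * (TZ * iY) = iY from by
            rw [← mul_assoc, cZZ', one_mul], cYY]
  -- now unfold the outer lftSymm and substitute
  rw [show lftSymm C D Wv (lftSymm C D Yv Zv) =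
      Wv - ((lftSymm C D Yv Zv) - Wv).comp
        ((iY.comp (TZ.comp iY)).comp TW) from by
    rw [lftSymm, hiA, mul_def, mul_def]]
  simp only [lftSymm, ← hiY, ← hTY, ← hTW, ← hTZ, ← hiZ]
  simp only [comp_sub, sub_comp, comp_add, add_comp, comp_assoc, comp_id, id_comp,
    lTYiY, liYTY, lTZiZ, liZTZ, bYY, bZZ, hcW', hcY', hcZ', hcW, hcY, hcZ]
  abel

/-- For all `W, Y ∈ 𝒟` the composition `U_W ∘ U_Y` is affine: with `X = (CY+D)⁻¹C`,
`U_W(U_Y(Z)) = U_W(Y) + (I+(W−Y)X)(Z−Y)(I+X(W−Y))` for every `Z ∈ 𝒟`. -/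
theorem comp_symm_affine
    {H K : Type*} [NormedAddCommGroup H] [InnerProductSpace ℂ H] [CompleteSpace H]
    [NormedAddCommGroup K] [InnerProductSpace ℂ K] [CompleteSpace K]
    (𝔄 : Submodule ℂ (H →L[ℂ] K)) (h𝔄 : IsClosed (𝔄 : Set (H →L[ℂ] K)))
    (C : K →L[ℂ] H) (D : H →L[ℂ] H) (Z₀ : 𝔄)
    (hZ₀ : IsUnit (C.comp (Z₀ : H →L[ℂ] K) + D))
    (hX₀ : ∀ Z : 𝔄, (Z : H →L[ℂ] K).comp
      (((Ring.inverse (C.comp (Z₀ : H →L[ℂ] K) + D)).comp C).comp (Z : H →L[ℂ] K)) ∈ 𝔄)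
    (𝒟 : Set ↥𝔄)
    (h𝒟 : 𝒟 = connectedComponentIn {Z : ↥𝔄 | IsUnit (C.comp (Z : H →L[ℂ] K) + D)} Z₀)
    (W Y : ↥𝔄) (hW : W ∈ 𝒟) (hY : Y ∈ 𝒟) (Z : ↥𝔄) (hZ : Z ∈ 𝒟) :
    lftSymm C D (W : H →L[ℂ] K) (lftSymm C D (Y : H →L[ℂ] K) (Z : H →L[ℂ] K)) =
      lftSymm C D (W : H →L[ℂ] K) (Y : H →L[ℂ] K) +
        ((ContinuousLinearMap.id ℂ K +
            ((W : H →L[ℂ] K) - (Y : H →L[ℂ] K)).comp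
              ((Ring.inverse (C.comp (Y : H →L[ℂ] K) + D)).comp C)).comp
          ((Z : H →L[ℂ] K) - (Y : H →L[ℂ] K))).comp
            (ContinuousLinearMap.id ℂ H +
              (((Ring.inverse (C.comp (Y : H →L[ℂ] K) + D)).comp C).comp
                ((W : H →L[ℂ] K) - (Y : H →L[ℂ] K)))) := by
  subst h𝒟
  have hW' := connectedComponentIn_subset
    {Z : ↥𝔄 | IsUnit (C.comp (Z : H →L[ℂ] K) + D)} Z₀ hW
  have hY' := connectedComponentIn_subset
    {Z : ↥𝔄 | IsUnit (C.comp (Z : H →L[ℂ] K) + D)} Z₀ hY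
  have hZ' := connectedComponentIn_subset
    {Z : ↥𝔄 | IsUnit (C.comp (Z : H →L[ℂ] K) + D)} Z₀ hZ
  exact lftSymm_comp_key C D _ _ _ hW' hY' hZ'
end

section
/- For every Z ∈ 𝔄 with ‖X₀(Z−Z₀)‖ < 1 there exists an entire holomorphic function f : ℂ → 𝔄 such that f(λ) ∈ 𝒟 for all λ ∈ ℂ, f(0) = Z₀ and f(1) = Z. -/
open ContinuousLinearMap Set

set_option synthInstance.maxHeartbeats 1000000
set_option maxHeartbeats 1000000

private lemma descP_smeval_eq_prod (x : ℂ) (k : ℕ) :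
    (descPochhammer ℤ k).smeval x = ∏ j ∈ Finset.range k, (x - j) := by
  induction k with
  | zero => simp [descPochhammer_zero, Polynomial.smeval_one]
  | succ n ih =>
    rw [descPochhammer_succ_right, Polynomial.smeval_mul, ih, Finset.prod_range_succ,
      Polynomial.smeval_sub, Polynomial.smeval_X, Polynomial.smeval_natCast]
    simp

private lemma choose_eq_prod (x : ℂ) (k : ℕ) :
    Ring.choose x k = (∏ j ∈ Finset.range k, (x - j)) / (k.factorial : ℂ) := by
  have h := Ring.descPochhammer_eq_factorial_smul_choose (R := ℂ) x k
  rw [descP_smeval_eq_prod] at h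
  rw [eq_div_iff (by exact_mod_cast k.factorial_ne_zero)]
  rw [h, nsmul_eq_mul, mul_comm]

private noncomputable def pcoef (R : ℝ) (k : ℕ) : ℝ :=
  ∏ j ∈ Finset.range k, ((R + j) / (j + 1))

private lemma pcoef_nonneg {R : ℝ} (hR : 0 ≤ R) (k : ℕ) : 0 ≤ pcoef R k := by
  refine Finset.prod_nonneg fun j _ => div_nonneg (by positivity) (by positivity)

private lemma pcoef_succ (R : ℝ) (k : ℕ) :
    pcoef R (k + 1) = pcoef R k * ((R + k) / (k + 1)) := Finset.prod_range_succ _ _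

private lemma norm_choose_le {x : ℂ} {R : ℝ} (hx : ‖x‖ ≤ R) (k : ℕ) :
    ‖Ring.choose x k‖ ≤ pcoef R k := by
  have hR : 0 ≤ R := le_trans (norm_nonneg x) hx
  rw [choose_eq_prod, pcoef, Finset.prod_div_distrib, norm_div, norm_prod]
  have hden : ‖(k.factorial : ℂ)‖ = ∏ j ∈ Finset.range k, ((j : ℝ) + 1) := by
    have : ∏ j ∈ Finset.range k, ((j : ℝ) + 1) = (k.factorial : ℝ) := by
      exact_mod_cast Finset.prod_range_add_one_eq_factorial k
    rw [this]
    simp [Complex.norm_natCast]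
  rw [hden]
  have hpos : (0:ℝ) < ∏ j ∈ Finset.range k, ((j : ℝ) + 1) :=
    Finset.prod_pos fun j _ => by positivity
  refine div_le_div₀ ?_ ?_ hpos le_rfl
  · exact Finset.prod_nonneg fun j _ => by positivity
  · refine Finset.prod_le_prod (fun j _ => norm_nonneg _) fun j _ => ?_
    calc ‖x - (j:ℂ)‖ ≤ ‖x‖ + ‖(j:ℂ)‖ := norm_sub_le _ _
    _ ≤ R + j := by simp [Complex.norm_natCast]; exact hx


open Filter in
private lemma summable_pcoef {R q : ℝ} (hR : 0 ≤ R) (hq0 : 0 ≤ q) (hq1 : q < 1) (m : ℕ) :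
    Summable (fun n => pcoef R (n + m) * q ^ n) := by
  refine summable_of_ratio_norm_eventually_le (r := (1 + q) / 2) (by linarith) ?_
  have htend : Tendsto (fun n : ℕ => ((R + (n + m)) / ((n : ℝ) + m + 1)) * q) atTop (nhds q) := by
    have h1 : Tendsto (fun n : ℕ => ((n : ℝ) + m + 1)) atTop atTop := by
      apply tendsto_atTop_add_const_right
      apply tendsto_atTop_add_const_right
      exact tendsto_natCast_atTop_atTop
    have h2 : Tendsto (fun n : ℕ => (R - 1) / ((n : ℝ) + m + 1)) atTop (nhds 0) :=
      Tendsto.div_atTop tendsto_const_nhds h1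
    have h3 : Tendsto (fun n : ℕ => (R - 1) / ((n : ℝ) + m + 1) + 1) atTop (nhds 1) := by
      simpa using h2.add tendsto_const_nhds
    have heq : ∀ n : ℕ, (R - 1) / ((n : ℝ) + m + 1) + 1 = (R + (n + m)) / ((n : ℝ) + m + 1) := by
      intro n
      have hne : ((n : ℝ) + m + 1) ≠ 0 := by positivity
      field_simp
      ring
    simp only [heq] at h3
    simpa using h3.mul_const q
  have hev : ∀ᶠ n : ℕ in atTop, ((R + (n + m)) / ((n : ℝ) + m + 1)) * q < (1 + q) / 2 := by
    exact htend.eventually_lt_const (by linarith)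
  filter_upwards [hev] with n hn
  have hnn : 0 ≤ pcoef R (n + m) * q ^ n :=
    mul_nonneg (pcoef_nonneg hR _) (pow_nonneg hq0 _)
  have hkey : pcoef R (n + 1 + m) * q ^ (n + 1)
      = (pcoef R (n + m) * q ^ n) * (((R + (n + m)) / ((n : ℝ) + m + 1)) * q) := by
    have : n + 1 + m = (n + m) + 1 := by ring
    rw [this, pcoef_succ, pow_succ]
    push_cast
    ring
  rw [Real.norm_eq_abs, Real.norm_eq_abs, abs_of_nonneg hnn,
    abs_of_nonneg (mul_nonneg (pcoef_nonneg hR _) (pow_nonneg hq0 _)), hkey, mul_comm ((1+q)/2)]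
  exact mul_le_mul_of_nonneg_left (le_of_lt hn) hnn

private lemma choose_one_succ_succ (k : ℕ) : Ring.choose (1 : ℂ) (k + 1 + 1) = 0 := by
  have : ((1 : ℕ) : ℂ) = (1 : ℂ) := by norm_num
  rw [← this, Ring.choose_natCast]
  have : Nat.choose 1 (k + 2) = 0 := Nat.choose_eq_zero_of_lt (by omega)
  rw [this, Nat.cast_zero]

private lemma differentiable_choose (k : ℕ) :
    Differentiable ℂ (fun x : ℂ => Ring.choose x k) := by
  have : (fun x : ℂ => Ring.choose x k)
      = fun x : ℂ => (∏ j ∈ Finset.range k, (x - j)) / (k.factorial : ℂ) := by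
    funext x; exact choose_eq_prod x k
  rw [this]
  apply Differentiable.div_const
  apply Differentiable.fun_finsetProd
  intro j _
  exact differentiable_id.sub_const _

/-- For every `Z ∈ 𝔄` with `‖X₀(Z−Z₀)‖ < 1` there is an entire function `f : ℂ → 𝔄` taking
all of its values in `𝒟` with `f(0) = Z₀` and `f(1) = Z`. -/
theorem exists_entire_curve_in_domain_of_LFT
    {H K : Type*} [NormedAddCommGroup H] [InnerProductSpace ℂ H] [CompleteSpace H]
    [NormedAddCommGroup K] [InnerProductSpace ℂ K] [CompleteSpace K]
    (𝔄 : Submodule ℂ (H →L[ℂ] K)) (h𝔄 : IsClosed (𝔄 : Set (H →L[ℂ] K)))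
    (C : K →L[ℂ] H) (D : H →L[ℂ] H) (Z₀ : 𝔄)
    (hZ₀ : IsUnit (C.comp (Z₀ : H →L[ℂ] K) + D))
    (hX₀ : ∀ Z : 𝔄, (Z : H →L[ℂ] K).comp
      (((Ring.inverse (C.comp (Z₀ : H →L[ℂ] K) + D)).comp C).comp (Z : H →L[ℂ] K)) ∈ 𝔄)
    (𝒟 : Set ↥𝔄)
    (h𝒟 : 𝒟 = connectedComponentIn {Z : ↥𝔄 | IsUnit (C.comp (Z : H →L[ℂ] K) + D)} Z₀)
    (Z : ↥𝔄)
    (hZ : ‖((Ring.inverse (C.comp (Z₀ : H →L[ℂ] K) + D)).comp C).comp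
      ((Z : H →L[ℂ] K) - (Z₀ : H →L[ℂ] K))‖ < 1) :
    ∃ f : ℂ → ↥𝔄, AnalyticOnNhd ℂ f Set.univ ∧
      (∀ lam : ℂ, f lam ∈ 𝒟) ∧ f 0 = Z₀ ∧ f 1 = Z := by
  classical
  haveI : CompleteSpace ↥𝔄 := h𝔄.completeSpace_coe
  set T : H →L[ℂ] H := C.comp (Z₀ : H →L[ℂ] K) + D with hTdef
  set X₀ : K →L[ℂ] H := (Ring.inverse T).comp C with hX₀def
  set Y : H →L[ℂ] K := (Z : H →L[ℂ] K) - (Z₀ : H →L[ℂ] K) with hYdef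
  set W : H →L[ℂ] H := X₀.comp Y with hWdef
  have hW1 : ‖W‖ < 1 := hZ
  have hq0 : (0:ℝ) ≤ ‖W‖ := norm_nonneg _
  have hYmem : Y ∈ 𝔄 := sub_mem Z.2 Z₀.2
  set A : ℕ → (H →L[ℂ] K) := fun n => Y.comp (W ^ n) with hAdef
  have hA0 : A 0 = Y := by
    simp only [hAdef, pow_zero, ContinuousLinearMap.one_def, ContinuousLinearMap.comp_id]
  have hAsucc : ∀ n, A (n + 1) = (A n).comp W := by
    intro n
    simp only [hAdef, pow_succ, ContinuousLinearMap.mul_def, ← ContinuousLinearMap.comp_assoc]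
  have polar : ∀ E F : H →L[ℂ] K, E ∈ 𝔄 → F ∈ 𝔄 →
      E.comp (X₀.comp F) + F.comp (X₀.comp E) ∈ 𝔄 := by
    intro E F hE hF
    have h1 : (E + F).comp (X₀.comp (E + F)) ∈ 𝔄 := hX₀ ⟨E + F, add_mem hE hF⟩
    have h2 : E.comp (X₀.comp E) ∈ 𝔄 := hX₀ ⟨E, hE⟩
    have h3 : F.comp (X₀.comp F) ∈ 𝔄 := hX₀ ⟨F, hF⟩
    have hexp : E.comp (X₀.comp F) + F.comp (X₀.comp E)
        = (E + F).comp (X₀.comp (E + F)) - E.comp (X₀.comp E) - F.comp (X₀.comp F) := by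
      simp only [ContinuousLinearMap.comp_add, ContinuousLinearMap.add_comp]
      abel
    rw [hexp]
    exact sub_mem (sub_mem h1 h2) h3
  have hAmem : ∀ n, A n ∈ 𝔄 := by
    intro n
    induction n with
    | zero => rw [hA0]; exact hYmem
    | succ n ih =>
      have hp := polar (A n) Y ih hYmem
      have e1 : (A n).comp (X₀.comp Y) = A (n + 1) := by
        rw [← hWdef, ← hAsucc]
      have e2 : Y.comp (X₀.comp (A n)) = A (n + 1) := by
        have hinner : X₀.comp (Y.comp (W ^ n)) = W ^ (n + 1) := by
          rw [← ContinuousLinearMap.comp_assoc, ← hWdef, ← ContinuousLinearMap.mul_def W,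
            ← pow_succ']
        simp only [hAdef]
        rw [hinner]
      rw [e1, e2] at hp
      have h2x : A (n + 1) = (2⁻¹ : ℂ) • (A (n + 1) + A (n + 1)) := by
        rw [← two_smul ℂ, smul_smul]
        norm_num
      rw [h2x]
      exact 𝔄.smul_mem _ hp
  have hAnorm : ∀ n, ‖A n‖ ≤ ‖Y‖ * ‖W‖ ^ n := by
    intro n
    induction n with
    | zero => rw [hA0]; simp
    | succ n ih =>
      rw [hAsucc]
      calc ‖(A n).comp W‖ ≤ ‖A n‖ * ‖W‖ := ContinuousLinearMap.opNorm_comp_le _ _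
        _ ≤ ‖Y‖ * ‖W‖ ^ n * ‖W‖ := mul_le_mul_of_nonneg_right ih hq0
        _ = ‖Y‖ * ‖W‖ ^ (n + 1) := by rw [pow_succ]; ring
  set a : ℕ → ↥𝔄 := fun n => ⟨A n, hAmem n⟩ with hadef
  have hnorma : ∀ n, ‖a n‖ = ‖A n‖ := fun n => rfl
  have hbound : ∀ (R : ℝ) (x : ℂ), ‖x‖ ≤ R → ∀ n,
      ‖Ring.choose x (n + 1) • a n‖ ≤ pcoef R (n + 1) * ‖W‖ ^ n * ‖Y‖ := by
    intro R x hx n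
    have hR : 0 ≤ R := le_trans (norm_nonneg x) hx
    have hcoe : ‖Ring.choose x (n + 1) • a n‖ = ‖Ring.choose x (n + 1) • A n‖ := rfl
    rw [hcoe, norm_smul (α := ℂ) (β := H →L[ℂ] K) (Ring.choose x (n + 1)) (A n)]
    calc ‖Ring.choose x (n + 1)‖ * ‖A n‖
        ≤ pcoef R (n + 1) * (‖Y‖ * ‖W‖ ^ n) :=
          mul_le_mul (norm_choose_le hx _) (hAnorm n) (norm_nonneg _) (pcoef_nonneg hR _)
      _ = pcoef R (n + 1) * ‖W‖ ^ n * ‖Y‖ := by ring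
  have hsumu : ∀ R : ℝ, 0 ≤ R → Summable (fun n => pcoef R (n + 1) * ‖W‖ ^ n * ‖Y‖) :=
    fun R hR => (summable_pcoef hR hq0 hW1 1).mul_right ‖Y‖
  have hsummable : ∀ x : ℂ, Summable (fun n => Ring.choose x (n + 1) • a n) := fun x =>
    Summable.of_norm_bounded (hsumu ‖x‖ (norm_nonneg x)) (hbound ‖x‖ x le_rfl)
  set g : ℂ → ↥𝔄 := fun x => ∑' n, Ring.choose x (n + 1) • a n with hgdef
  set f : ℂ → ↥𝔄 := fun x => Z₀ + g x with hfdef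
  -- the binomial series in `W`
  set B : ℂ → (H →L[ℂ] H) := fun m => ∑' n, Ring.choose m n • W ^ n with hBdef
  have hWpow : ∀ n : ℕ, ‖W ^ n‖ ≤ ‖W‖ ^ n := by
    intro n
    induction n with
    | zero =>
      rw [pow_zero, pow_zero, ContinuousLinearMap.one_def]
      exact ContinuousLinearMap.norm_id_le
    | succ n ih =>
      rw [pow_succ, pow_succ]
      exact le_trans (norm_mul_le _ _) (mul_le_mul_of_nonneg_right ih hq0)
  have hBnormsum : ∀ m : ℂ, Summable (fun n => ‖Ring.choose m n • W ^ n‖) := by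
    intro m
    have hs : Summable (fun n => pcoef ‖m‖ (n + 0) * ‖W‖ ^ n) :=
      summable_pcoef (norm_nonneg m) hq0 hW1 0
    simp only [Nat.add_zero] at hs
    refine Summable.of_nonneg_of_le (fun n => norm_nonneg _) (fun n => ?_) hs
    rw [norm_smul (α := ℂ) (β := H →L[ℂ] H) _ _]
    exact mul_le_mul (norm_choose_le le_rfl n) (hWpow n) (norm_nonneg _)
      (pcoef_nonneg (norm_nonneg m) n)
  have hBsummable : ∀ m : ℂ, Summable (fun n => Ring.choose m n • W ^ n) :=
    fun m => (hBnormsum m).of_norm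
  have hBmul : ∀ m m' : ℂ, B m * B m' = B (m + m') := by
    intro m m'
    simp only [hBdef]
    rw [tsum_mul_tsum_eq_tsum_sum_antidiagonal_of_summable_norm (hBnormsum m) (hBnormsum m')]
    refine tsum_congr fun n => ?_
    have hterm : ∀ kl ∈ Finset.HasAntidiagonal.antidiagonal n,
        (Ring.choose m kl.1 • W ^ kl.1) * (Ring.choose m' kl.2 • W ^ kl.2)
          = (Ring.choose m kl.1 * Ring.choose m' kl.2) • W ^ n := by
      intro kl hkl
      rw [smul_mul_assoc, mul_smul_comm, smul_smul, ← pow_add,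
        Finset.HasAntidiagonal.mem_antidiagonal.mp hkl]
    rw [Finset.sum_congr rfl hterm, ← Finset.sum_smul]
    congr 1
    exact (Ring.add_choose_eq n (Commute.all m m')).symm
  have hB0 : B (0 : ℂ) = 1 := by
    simp only [hBdef]
    rw [tsum_eq_single 0 ?_]
    · rw [Ring.choose_zero_right, pow_zero, one_smul]
    · intro n hn
      obtain ⟨k, rfl⟩ := Nat.exists_eq_succ_of_ne_zero hn
      rw [Ring.choose_zero_succ, zero_smul]
  have hBunit : ∀ m : ℂ, IsUnit (B m) := by
    intro m
    refine isUnit_iff_exists.mpr ⟨B (-m), ?_, ?_⟩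
    · rw [hBmul m (-m), add_neg_cancel, hB0]
    · rw [hBmul (-m) m, neg_add_cancel, hB0]
  have hTinv : T.comp (Ring.inverse T) = 1 := by
    rw [← ContinuousLinearMap.mul_def]
    exact Ring.mul_inverse_cancel T hZ₀
  have hTW : T.comp W = C.comp Y := by
    rw [hWdef, hX₀def, ← ContinuousLinearMap.comp_assoc, ← ContinuousLinearMap.comp_assoc,
      hTinv, ContinuousLinearMap.one_def, ContinuousLinearMap.id_comp]
  have hCA : ∀ n : ℕ, C.comp (A n) = T * W ^ (n + 1) := by
    intro n
    simp only [hAdef]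
    rw [← ContinuousLinearMap.comp_assoc, ← hTW, ContinuousLinearMap.comp_assoc,
      ← ContinuousLinearMap.mul_def W, ← pow_succ', ContinuousLinearMap.mul_def]
  have hcoe : ∀ x : ℂ, ((f x : ↥𝔄) : H →L[ℂ] K)
      = ((Z₀ : ↥𝔄) : H →L[ℂ] K) + ∑' n, Ring.choose x (n + 1) • A n := by
    intro x
    have h := ContinuousLinearMap.map_tsum 𝔄.subtypeL (hsummable x)
    simp only [Submodule.subtypeL_apply] at h
    have h2 : ∀ n : ℕ, ((Ring.choose x (n + 1) • a n : ↥𝔄) : H →L[ℂ] K)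
        = Ring.choose x (n + 1) • A n := fun n => rfl
    simp only [h2] at h
    have h3 : ((f x : ↥𝔄) : H →L[ℂ] K)
        = ((Z₀ : ↥𝔄) : H →L[ℂ] K) + ((g x : ↥𝔄) : H →L[ℂ] K) := rfl
    rw [h3]
    congr 1
  have hsumA : ∀ x : ℂ, Summable (fun n => Ring.choose x (n + 1) • A n) := by
    intro x
    refine Summable.of_norm_bounded (hsumu ‖x‖ (norm_nonneg x)) (fun n => ?_)
    exact hbound ‖x‖ x le_rfl n
  have hunit : ∀ x : ℂ, IsUnit (C.comp ((f x : ↥𝔄) : H →L[ℂ] K) + D) := by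
    intro x
    have hmap := ContinuousLinearMap.map_tsum ((ContinuousLinearMap.compL ℂ H K H) C) (hsumA x)
    simp only [ContinuousLinearMap.compL_apply, map_smul] at hmap
    have hTB : T * B x = T + ∑' n, Ring.choose x (n + 1) • (T * W ^ (n + 1)) := by
      have hs : Summable (fun n => T * (Ring.choose x n • W ^ n)) := (hBsummable x).mul_left T
      have h1 : T * B x = ∑' n, T * (Ring.choose x n • W ^ n) := by
        simp only [hBdef]
        exact ((hBsummable x).tsum_mul_left T).symm
      rw [h1, Summable.tsum_eq_zero_add hs]
      have hterm0 : T * (Ring.choose x 0 • W ^ 0) = T := by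
        rw [Ring.choose_zero_right, pow_zero, one_smul, mul_one]
      have htermn : (∑' n : ℕ, T * (Ring.choose x (n + 1) • W ^ (n + 1)))
          = ∑' n : ℕ, Ring.choose x (n + 1) • (T * W ^ (n + 1)) :=
        tsum_congr fun n => mul_smul_comm _ _ _
      rw [hterm0, htermn]
    have hkey : C.comp ((f x : ↥𝔄) : H →L[ℂ] K) + D = T * B x := by
      have hc : (∑' n : ℕ, Ring.choose x (n + 1) • C.comp (A n))
          = ∑' n : ℕ, Ring.choose x (n + 1) • (T * W ^ (n + 1)) :=
        tsum_congr fun n => by rw [hCA n]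
      rw [hcoe x, ContinuousLinearMap.comp_add, hmap, hTB, hc, hTdef]
      abel
    rw [hkey]
    exact hZ₀.mul (hBunit x)
  -- differentiability of `g` and `f`
  have hdiffg : Differentiable ℂ g := by
    intro x
    have hRpos : (0:ℝ) ≤ ‖x‖ + 1 := by positivity
    have hball : ∀ y : ℂ, y ∈ Metric.ball (0:ℂ) (‖x‖ + 1) → ‖y‖ ≤ ‖x‖ + 1 := by
      intro y hy
      rw [Metric.mem_ball, dist_zero_right] at hy
      exact hy.le
    have hTU := tendstoUniformlyOn_tsum (hsumu (‖x‖ + 1) hRpos)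
      (fun n y hy => hbound (‖x‖ + 1) y (hball y hy) n)
    have hDOn : DifferentiableOn ℂ g (Metric.ball (0:ℂ) (‖x‖ + 1)) := by
      refine hTU.tendstoLocallyUniformlyOn.differentiableOn ?_ Metric.isOpen_ball
      refine Filter.Eventually.of_forall fun t => ?_
      refine Differentiable.differentiableOn ?_
      refine Differentiable.fun_sum fun n _ => ?_
      letI : IsBoundedSMul ℂ ↥𝔄 := NormedSpace.toIsBoundedSMul (𝕜 := ℂ) (E := 𝔄)
      exact (differentiable_choose (n + 1)).smul_const (a n)
    refine hDOn.differentiableAt (Metric.isOpen_ball.mem_nhds ?_)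
    rw [Metric.mem_ball, dist_zero_right]
    linarith
  have hdifff : Differentiable ℂ f :=
    fun x => DifferentiableAt.fun_add (𝕜 := ℂ) (E := ℂ) (F := ↥𝔄) (differentiableAt_const _) (hdiffg x)
  have hanalytic : AnalyticOnNhd ℂ f Set.univ :=
    hdifff.differentiableOn.analyticOnNhd isOpen_univ
  -- endpoints
  have hf0 : f 0 = Z₀ := by
    have hg0 : g 0 = 0 := by
      have hz : ∀ n : ℕ, Ring.choose (0:ℂ) (n + 1) • a n = 0 := fun n => by
        rw [Ring.choose_zero_succ, zero_smul]
      simp only [hgdef]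
      rw [tsum_congr hz, tsum_zero]
    show Z₀ + g 0 = Z₀
    rw [hg0, add_zero]
  have hf1 : f 1 = Z := by
    have ha0 : a 0 = Z - Z₀ := by
      apply Subtype.ext
      show A 0 = ((Z - Z₀ : ↥𝔄) : H →L[ℂ] K)
      rw [hA0, hYdef]
      rfl
    have hg1 : g 1 = a 0 := by
      simp only [hgdef]
      rw [tsum_eq_single 0 ?_]
      · rw [zero_add, Ring.choose_one_right, one_smul]
      · intro n hn
        obtain ⟨k, rfl⟩ := Nat.exists_eq_succ_of_ne_zero hn
        rw [choose_one_succ_succ, zero_smul]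
    show Z₀ + g 1 = Z
    rw [hg1, ha0]
    abel
  -- membership in 𝒟
  have hmem : ∀ x : ℂ, f x ∈ 𝒟 := by
    rw [h𝒟]
    have hrange : Set.range f ⊆ {Y0 : ↥𝔄 | IsUnit (C.comp (Y0 : H →L[ℂ] K) + D)} := by
      rintro y ⟨x, rfl⟩
      exact hunit x
    have hsub := (isPreconnected_range hdifff.continuous).subset_connectedComponentIn
      ⟨0, hf0⟩ hrange
    exact fun x => hsub ⟨x, rfl⟩
  exact ⟨f, hanalytic, hmem, hf0, hf1⟩
end

section
/- If C ∈ ℒ(K,H) has finite rank, then there exists a holomorphic function f : ℒ(H,K) → ℂ such that for every Z ∈ ℒ(H,K), the operator I + CZ is invertible in ℒ(H) if and only if f(Z) ≠ 0. -/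
open ContinuousLinearMap Set

set_option synthInstance.maxHeartbeats 1000000
set_option maxHeartbeats 1000000

/-- One direction of the "Jacobson's lemma" style fact across two spaces:
if `1 + b ∘ a` is invertible then so is `1 + a ∘ b`. -/
lemma aux_isUnit_one_add_comp {E F : Type*} [NormedAddCommGroup E] [NormedSpace ℂ E]
    [NormedAddCommGroup F] [NormedSpace ℂ F] (a : F →L[ℂ] E) (b : E →L[ℂ] F)
    (h : IsUnit ((1 : F →L[ℂ] F) + b.comp a)) :
    IsUnit ((1 : E →L[ℂ] E) + a.comp b) := by
  obtain ⟨u, hu⟩ := h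
  set v : F →L[ℂ] F := ↑u⁻¹ with hv
  have hu1 : ((1 : F →L[ℂ] F) + b.comp a) * v = 1 := by
    rw [← hu, hv]; exact u.mul_inv
  have hu2 : v * ((1 : F →L[ℂ] F) + b.comp a) = 1 := by
    rw [← hu, hv]; exact u.inv_mul
  refine isUnit_iff_exists.2 ⟨(1 : E →L[ℂ] E) - a.comp (v.comp b), ?_, ?_⟩
  · ext x
    have h1 := congrFun (congrArg (DFunLike.coe) hu1) (b x)
    simp only [ContinuousLinearMap.mul_apply, ContinuousLinearMap.add_apply,
      ContinuousLinearMap.sub_apply, ContinuousLinearMap.comp_apply,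
      ContinuousLinearMap.one_apply] at h1 ⊢
    have hb : b (x - a (v (b x))) = v (b x) := by
      rw [map_sub, sub_eq_iff_eq_add]
      exact h1.symm
    rw [hb]
    abel
  · ext x
    have h2 := congrFun (congrArg (DFunLike.coe) hu2) (b x)
    simp only [ContinuousLinearMap.mul_apply, ContinuousLinearMap.add_apply,
      ContinuousLinearMap.sub_apply, ContinuousLinearMap.comp_apply,
      ContinuousLinearMap.one_apply] at h2 ⊢
    have hb2 : b (x + a (b x)) = b x + b (a (b x)) := map_add b _ _
    rw [hb2, h2]
    abel

/-- If `C ∈ ℒ(K,H)` has finite rank, then there is an entire holomorphic function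
`f : ℒ(H,K) → ℂ` (a determinant) such that `I + CZ` is invertible iff `f(Z) ≠ 0`. -/
theorem exists_det_function_of_finiteRank
    {H K : Type*} [NormedAddCommGroup H] [InnerProductSpace ℂ H] [CompleteSpace H]
    [NormedAddCommGroup K] [InnerProductSpace ℂ K] [CompleteSpace K]
    (C : K →L[ℂ] H) (hC : FiniteDimensional ℂ ↥(LinearMap.range (C : K →ₗ[ℂ] H))) :
    ∃ f : (H →L[ℂ] K) → ℂ, AnalyticOnNhd ℂ f Set.univ ∧
      ∀ Z : H →L[ℂ] K, IsUnit ((1 : H →L[ℂ] H) + C.comp Z) ↔ f Z ≠ 0 := by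
  classical
  set V : Submodule ℂ H := LinearMap.range (C : K →ₗ[ℂ] H) with hV
  haveI : FiniteDimensional ℂ V := hC
  haveI : CompleteSpace V := FiniteDimensional.complete ℂ V
  -- corestriction of C and inclusion
  let C' : K →L[ℂ] V := C.codRestrict V (fun x => LinearMap.mem_range_self _ x)
  let ι : V →L[ℂ] H := V.subtypeL
  -- the continuous linear map Z ↦ C' ∘ Z ∘ ι
  let T : (H →L[ℂ] K) →L[ℂ] (V →L[ℂ] V) :=
    ((ContinuousLinearMap.compL ℂ V H V).flip ι).comp
      (ContinuousLinearMap.compL ℂ H K V C')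
  have hT : ∀ Z : H →L[ℂ] K, T Z = (C'.comp Z).comp ι := by
    intro Z; rfl
  -- the determinant function
  let g : (H →L[ℂ] K) → (V →ₗ[ℂ] V) := fun Z =>
    (((1 : V →L[ℂ] V) + T Z : V →L[ℂ] V) : V →ₗ[ℂ] V)
  refine ⟨fun Z => LinearMap.det (g Z), ?_, ?_⟩
  · -- analyticity
    let b := Module.finBasis ℂ V
    have hdet : ∀ Z, LinearMap.det (g Z) =
        ∑ σ : Equiv.Perm (Fin (Module.finrank ℂ V)),
          ((Equiv.Perm.sign σ : ℤ) : ℂ) *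
            ∏ i, (LinearMap.toMatrix b b (g Z)) (σ i) i := by
      intro Z
      rw [← LinearMap.det_toMatrix b (g Z), Matrix.det_apply']
    have : AnalyticOnNhd ℂ (fun Z =>
        ∑ σ : Equiv.Perm (Fin (Module.finrank ℂ V)),
          ((Equiv.Perm.sign σ : ℤ) : ℂ) *
            ∏ i, (LinearMap.toMatrix b b (g Z)) (σ i) i) Set.univ := by
      apply Finset.analyticOnNhd_fun_sum
      intro σ _
      apply AnalyticOnNhd.mul analyticOnNhd_const
      apply Finset.analyticOnNhd_fun_prod
      intro i _
      -- the entry is constant plus a continuous linear functional of Z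
      let ev : (↥V →L[ℂ] ↥V) →L[ℂ] ↥V := (ContinuousLinearMap.apply ℂ ↥V) (b i)
      let coord : ↥V →L[ℂ] ℂ := LinearMap.toContinuousLinearMap (b.coord (σ i))
      let ℓ : (↥V →L[ℂ] ↥V) →L[ℂ] ℂ := coord.comp ev
      have hentry : ∀ Z, (LinearMap.toMatrix b b (g Z)) (σ i) i =
          b.repr (b i) (σ i) + (ℓ.comp T) Z := by
        intro Z
        simp only [LinearMap.toMatrix_apply, g, ContinuousLinearMap.coe_coe,
          ContinuousLinearMap.add_apply, ContinuousLinearMap.one_apply, map_add]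
        simp [ℓ, coord, ev, Module.Basis.coord_apply]
      simp only [hentry]
      exact analyticOnNhd_const.add (ContinuousLinearMap.analyticOnNhd _ _)
    intro Z hZ
    simpa only [hdet] using this Z hZ
  · intro Z
    -- step 1: I + CZ unit iff 1 + T Z unit
    have hfac : C.comp Z = ι.comp (C'.comp Z) := by ext x; rfl
    have step1 : IsUnit ((1 : H →L[ℂ] H) + C.comp Z) ↔
        IsUnit ((1 : V →L[ℂ] V) + T Z) := by
      constructor
      · intro h
        rw [hfac] at h
        rw [hT Z]
        exact aux_isUnit_one_add_comp (C'.comp Z) ι h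
      · intro h
        rw [hT Z] at h
        rw [hfac]
        exact aux_isUnit_one_add_comp ι (C'.comp Z) h
    rw [step1]
    -- step 2: unit iff det ≠ 0
    constructor
    · intro h hdet
      have hb : Function.Bijective ((1 : V →L[ℂ] V) + T Z) :=
        ContinuousLinearMap.isUnit_iff_bijective.1 h
      have hb' : Function.Bijective (g Z) := hb
      have this1 : IsUnit (LinearMap.det
          ((LinearEquiv.ofBijective (g Z) hb' : V ≃ₗ[ℂ] V) : V →ₗ[ℂ] V)) :=
        LinearEquiv.isUnit_det' _
      have hcoe : ((LinearEquiv.ofBijective (g Z) hb' : V ≃ₗ[ℂ] V) : V →ₗ[ℂ] V) = g Z := rfl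
      rw [hcoe] at this1
      exact (isUnit_iff_ne_zero.1 this1) hdet
    · intro hdet
      let b := Module.finBasis ℂ V
      have hdet' : IsUnit (LinearMap.toMatrix b b (g Z)).det := by
        rw [LinearMap.det_toMatrix]
        exact isUnit_iff_ne_zero.2 hdet
      have he : ((LinearEquiv.ofIsUnitDet hdet' : V ≃ₗ[ℂ] V) : V →ₗ[ℂ] V) = g Z :=
        LinearEquiv.coe_ofIsUnitDet hdet'
      have hbij : Function.Bijective (g Z) := he ▸ (LinearEquiv.ofIsUnitDet hdet').bijective
      exact ContinuousLinearMap.isUnit_iff_bijective.2 hbij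
end

section
/- If CZ is a compact operator for every Z ∈ 𝔄 and the set 𝒟 = {Z ∈ 𝔄 : CZ+D is invertible} is nonempty, then 𝒟 is connected. -/
open ContinuousLinearMap Set

set_option synthInstance.maxHeartbeats 1000000
set_option maxHeartbeats 1000000

section AuxiliaryCompactSpectrum

open Filter Topology Metric

set_option linter.unusedSectionVars false
set_option linter.unusedVariables false
set_option linter.unnecessarySimpa false

variable {H : Type*} [NormedAddCommGroup H] [InnerProductSpace ℂ H] [CompleteSpace H]

local notation "⟪" x ", " y "⟫" => @inner ℂ _ _ x y

theorem cpt_subseq {T : H →L[ℂ] H} (hT : IsCompactOperator ⇑T)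
    {x : ℕ → H} (hx : ∀ n, ‖x n‖ ≤ 1) :
    ∃ y, ∃ φ : ℕ → ℕ, StrictMono φ ∧ Tendsto (fun n => T (x (φ n))) atTop (𝓝 y) := by
  have hK : IsCompact (closure (⇑T '' Metric.closedBall 0 1)) := by
    have : IsCompactOperator ⇑(T : H →ₗ[ℂ] H) := hT
    exact this.isCompact_closure_image_closedBall 1
  have hmem : ∀ n, T (x n) ∈ closure (⇑T '' Metric.closedBall 0 1) := fun n =>
    subset_closure ⟨x n, by simpa [Metric.mem_closedBall, dist_zero_right] using hx n, rfl⟩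
  obtain ⟨y, _, φ, hφ, hy⟩ := hK.tendsto_subseq hmem
  exact ⟨y, φ, hφ, hy⟩


theorem eigen_of_approx {T : H →L[ℂ] H} (hT : IsCompactOperator ⇑T) {μ : ℂ} (hμ : μ ≠ 0)
    {x : ℕ → H} (hx : ∀ n, ‖x n‖ = 1)
    (hlim : Tendsto (fun n => T (x n) - μ • x n) atTop (𝓝 0)) :
    ∃ v : H, v ≠ 0 ∧ T v = μ • v := by
  obtain ⟨y, φ, hφ, hy⟩ := cpt_subseq hT (fun n => (hx n).le)
  have hlimφ : Tendsto (fun n => T (x (φ n)) - μ • x (φ n)) atTop (𝓝 0) :=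
    hlim.comp hφ.tendsto_atTop
  have h2 : Tendsto (fun n => μ • x (φ n)) atTop (𝓝 y) := by
    have := hy.sub hlimφ
    simpa using this
  have h3 : Tendsto (fun n => x (φ n)) atTop (𝓝 (μ⁻¹ • y)) := by
    have := h2.const_smul μ⁻¹
    simpa [inv_smul_smul₀ hμ] using this
  have hnorm : ‖μ⁻¹ • y‖ = 1 := by
    have := ((continuous_norm.tendsto _).comp h3)
    refine tendsto_nhds_unique this ?_
    simpa [Function.comp_def, hx] using tendsto_const_nhds (x := (1:ℝ))
  have hTv : T (μ⁻¹ • y) = y := tendsto_nhds_unique ((T.continuous.tendsto _).comp h3) hy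
  refine ⟨μ⁻¹ • y, ?_, ?_⟩
  · intro h; rw [h, norm_zero] at hnorm; norm_num at hnorm
  · rw [hTv, smul_inv_smul₀ hμ]


theorem eigen_of_not_bddBelow {T : H →L[ℂ] H} (hT : IsCompactOperator ⇑T) {μ : ℂ} (hμ : μ ≠ 0)
    (h : ¬ ∃ c > 0, ∀ v : H, c * ‖v‖ ≤ ‖T v - μ • v‖) :
    ∃ v : H, v ≠ 0 ∧ T v = μ • v := by
  push_neg at h
  have h' : ∀ n : ℕ, ∃ v : H, ‖T v - μ • v‖ < (1 / (n + 1)) * ‖v‖ := by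
    intro n
    obtain ⟨v, hv⟩ := h (1 / (n + 1)) (by positivity)
    exact ⟨v, by linarith⟩
  choose u hu using h'
  have hune : ∀ n, u n ≠ 0 := by
    intro n hn
    have := hu n
    rw [hn] at this
    simp at this
  set x : ℕ → H := fun n => (‖u n‖ : ℂ)⁻¹ • u n with hxdef
  have hx : ∀ n, ‖x n‖ = 1 := by
    intro n
    have : ‖u n‖ ≠ 0 := norm_ne_zero_iff.2 (hune n)
    simp [hxdef, norm_smul, inv_mul_cancel₀ this]
  refine eigen_of_approx hT hμ hx ?_
  have key : ∀ n, ‖T (x n) - μ • x n‖ < 1 / (n + 1) := by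
    intro n
    have hn0 : (0:ℝ) < ‖u n‖ := norm_pos_iff.2 (hune n)
    have : T (x n) - μ • x n = (‖u n‖ : ℂ)⁻¹ • (T (u n) - μ • u n) := by
      simp [hxdef, smul_sub, smul_comm μ]
    rw [this, norm_smul]
    have : ‖((‖u n‖ : ℂ)⁻¹)‖ = ‖u n‖⁻¹ := by
      simp
    rw [this]
    calc ‖u n‖⁻¹ * ‖T (u n) - μ • u n‖ < ‖u n‖⁻¹ * ((1 / (n + 1)) * ‖u n‖) := by
          exact (mul_lt_mul_iff_right₀ (by positivity)).2 (hu n)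
      _ = 1 / (n + 1) := by field_simp
  have hto : Tendsto (fun n : ℕ => 1 / ((n : ℝ) + 1)) atTop (𝓝 0) :=
    tendsto_one_div_add_atTop_nhds_zero_nat
  rw [tendsto_zero_iff_norm_tendsto_zero]
  exact squeeze_zero (fun n => norm_nonneg _) (fun n => (key n).le) hto


theorem finite_eigen {T : H →L[ℂ] H} (hT : IsCompactOperator ⇑T) {ε : ℝ} (hε : 0 < ε) :
    {μ : ℂ | ε ≤ ‖μ‖ ∧ ∃ v : H, v ≠ 0 ∧ T v = μ • v}.Finite := by
  by_contra hinf
  rw [← Set.not_infinite, not_not] at hinf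
  set F := Set.Infinite.natEmbedding _ hinf with hF
  set μ : ℕ → ℂ := fun n => (F n : ℂ) with hμdef
  have hμinj : Function.Injective μ := fun a b h => F.injective (Subtype.ext h)
  have hεμ : ∀ n, ε ≤ ‖μ n‖ := fun n => (F n).2.1
  have hev : ∀ n, ∃ v : H, v ≠ 0 ∧ T v = μ n • v := fun n => (F n).2.2
  choose e he0 heT using hev
  have hli : LinearIndependent ℂ e := by
    refine Module.End.eigenvectors_linearIndependent' (↑T : H →ₗ[ℂ] H) μ hμinj e
      (fun n => ⟨Module.End.mem_eigenspace_iff.2 ?_, he0 n⟩)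
    simpa using heT n
  set M : ℕ → Submodule ℂ H := fun n => Submodule.span ℂ (e '' Set.Iic n) with hM
  have hMfd : ∀ n, FiniteDimensional ℂ (M n) := fun n =>
    FiniteDimensional.span_of_finite ℂ ((Set.finite_Iic n).image e)
  have hMmono : ∀ {m n : ℕ}, m ≤ n → M m ≤ M n := fun {m n} h =>
    Submodule.span_mono (Set.image_mono (Set.Iic_subset_Iic.2 h))
  have henot : ∀ n, e (n + 1) ∉ M n := fun n =>
    hli.notMem_span_image (by simp)
  -- construct orthogonal unit vectors
  haveI : ∀ n, CompleteSpace (M n) := fun n => by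
    haveI := hMfd n
    exact FiniteDimensional.complete ℂ (M n)
  set w : ℕ → H := fun n => e (n + 1) - ((M n).orthogonalProjection (e (n + 1)) : H) with hw
  have hw0 : ∀ n, w n ≠ 0 := by
    intro n h
    apply henot n
    have : e (n + 1) = ((M n).orthogonalProjection (e (n + 1)) : H) := by
      rwa [hw, sub_eq_zero] at h
    rw [this]; exact Submodule.coe_mem _
  set x : ℕ → H := fun n => (‖w n‖ : ℂ)⁻¹ • w n with hx
  have hxnorm : ∀ n, ‖x n‖ = 1 := by
    intro n
    have : ‖w n‖ ≠ 0 := norm_ne_zero_iff.2 (hw0 n)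
    simp [hx, norm_smul, inv_mul_cancel₀ this]
  have hxmem : ∀ n, x n ∈ M (n + 1) := by
    intro n
    apply Submodule.smul_mem
    apply Submodule.sub_mem
    · exact Submodule.subset_span ⟨n + 1, by simp, rfl⟩
    · exact hMmono (Nat.le_succ n) (Submodule.coe_mem _)
  have hxorth : ∀ n, x n ∈ (M n)ᗮ := fun n =>
    Submodule.smul_mem _ _ (Submodule.sub_starProjection_mem_orthogonal _)
  -- T - μ (n+1) maps M (n+1) into M n
  have hmap : ∀ n, ∀ v ∈ M (n + 1), T v - μ (n + 1) • v ∈ M n := by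
    intro n v hv
    set L : H →ₗ[ℂ] H := (↑T : H →ₗ[ℂ] H) - μ (n + 1) • LinearMap.id with hL
    have : Submodule.map L (M (n + 1)) ≤ M n := by
      rw [Submodule.map_span_le]
      rintro z ⟨k, hk, rfl⟩
      have : L (e k) = (μ k - μ (n + 1)) • e k := by
        simp [hL, heT k, sub_smul]
      rw [this]
      rcases Nat.lt_or_ge k (n + 1) with h | h
      · exact Submodule.smul_mem _ _ (Submodule.subset_span ⟨k, Nat.lt_succ_iff.1 h, rfl⟩)
      · have : k = n + 1 := le_antisymm hk h
        simp [this]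
    have := this ⟨v, hv, rfl⟩
    simpa [hL] using this
  -- separation
  have hsep : ∀ m n : ℕ, m < n → ε ≤ ‖T (x n) - T (x m)‖ := by
    intro m n hmn
    have h1 : T (x n) - μ (n + 1) • x n ∈ M n := by
      rcases Nat.exists_eq_add_of_lt (Nat.lt_succ_self n) with _
      exact hmap n (x n) (hxmem n)
    have h2 : T (x m) ∈ M n := by
      have : T (x m) = (T (x m) - μ (m + 1) • x m) + μ (m + 1) • x m := by abel
      rw [this]
      exact Submodule.add_mem _
        (hMmono (le_of_lt hmn) (hmap m (x m) (hxmem m)))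
        (hMmono hmn (Submodule.smul_mem _ _ (hxmem m)))
    have hb : T (x n) - T (x m) = μ (n + 1) • x n + ((T (x n) - μ (n + 1) • x n) - T (x m)) := by
      abel
    have hbmem : (T (x n) - μ (n + 1) • x n) - T (x m) ∈ M n := Submodule.sub_mem _ h1 h2
    have hinner : ⟪μ (n + 1) • x n, (T (x n) - μ (n + 1) • x n) - T (x m)⟫ = 0 := by
      rw [inner_smul_left]
      have := (Submodule.mem_orthogonal _ _).1 (hxorth n) _ hbmem
      -- this : ⟪b, x n⟫ = 0 ;  need ⟪x n, b⟫ = 0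
      have h0 : ⟪x n, (T (x n) - μ (n + 1) • x n) - T (x m)⟫ = 0 := by
        rw [← inner_conj_symm, this, map_zero]
      rw [h0, mul_zero]
    have hpyth : ‖T (x n) - T (x m)‖ ^ 2
        = ‖μ (n + 1) • x n‖ ^ 2 + ‖(T (x n) - μ (n + 1) • x n) - T (x m)‖ ^ 2 := by
      rw [hb]
      rw [@norm_add_sq ℂ _ _ _ _]
      rw [hinner]
      simp
    have hns : ε ≤ ‖μ (n + 1) • x n‖ := by
      rw [norm_smul, hxnorm n, mul_one]
      exact hεμ (n + 1)
    nlinarith [norm_nonneg (T (x n) - T (x m)),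
      sq_nonneg (‖(T (x n) - μ (n + 1) • x n) - T (x m)‖)]
  -- contradiction with compactness
  obtain ⟨y, φ, hφ, hy⟩ := cpt_subseq hT (fun n => (hxnorm n).le)
  have hc : CauchySeq (fun n => T (x (φ n))) := hy.cauchySeq
  obtain ⟨N, hN⟩ := Metric.cauchySeq_iff.1 hc ε hε
  have := hN (N + 1) (Nat.le_succ N) N (le_refl N)
  rw [dist_eq_norm] at this
  exact absurd this (not_lt.2 (hsep (φ N) (φ (N + 1)) (hφ (Nat.lt_succ_self N))))


theorem adjoint_compact {T : H →L[ℂ] H} (hT : IsCompactOperator ⇑T) :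
    IsCompactOperator ⇑(ContinuousLinearMap.adjoint T) := by
  set A := ContinuousLinearMap.adjoint T with hA
  -- key inequality
  have key : ∀ u v : H, ‖u‖ ≤ 1 → ‖v‖ ≤ 1 →
      ‖A u - A v‖ ^ 2 ≤ 2 * ‖(T.comp A) u - (T.comp A) v‖ := by
    intro u v hu hv
    have h1 : (‖A u - A v‖ : ℝ) ^ 2 = RCLike.re ⟪A (u - v), A (u - v)⟫ := by
      rw [← @inner_self_eq_norm_sq ℂ, map_sub]
    have h2 : ⟪A (u - v), A (u - v)⟫ = ⟪u - v, T (A (u - v))⟫ := by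
      rw [hA, ContinuousLinearMap.adjoint_inner_left]
    have h3 : ‖⟪u - v, T (A (u - v))⟫‖ ≤ ‖u - v‖ * ‖T (A (u - v))‖ := norm_inner_le_norm _ _
    have h4 : ‖u - v‖ ≤ 2 := by
      calc ‖u - v‖ ≤ ‖u‖ + ‖v‖ := norm_sub_le _ _
        _ ≤ 2 := by linarith
    have h5 : RCLike.re ⟪A (u - v), A (u - v)⟫ ≤ ‖⟪u - v, T (A (u - v))⟫‖ := by
      rw [h2]
      exact (RCLike.re_le_norm _)
    have h6 : T (A (u - v)) = (T.comp A) u - (T.comp A) v := by simp [map_sub]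
    calc ‖A u - A v‖ ^ 2 ≤ ‖⟪u - v, T (A (u - v))⟫‖ := by rw [h1]; exact h5
      _ ≤ ‖u - v‖ * ‖T (A (u - v))‖ := h3
      _ ≤ 2 * ‖(T.comp A) u - (T.comp A) v‖ := by
          rw [h6]
          exact mul_le_mul_of_nonneg_right h4 (norm_nonneg _) |>.trans_eq rfl
            |>.trans (le_of_eq rfl) |>.trans (by nlinarith [norm_nonneg ((T.comp A) u - (T.comp A) v)])
  suffices h : IsCompact (closure (⇑A '' Metric.closedBall 0 1)) by
    exact (isCompactOperator_iff_isCompact_closure_image_closedBall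
      (A : H →ₗ[ℂ] H) one_pos).2 h
  have hTA : IsCompactOperator ⇑(T.comp A) := by
    have := hT.comp_clm A
    rwa [← ContinuousLinearMap.coe_comp'] at this
  apply IsSeqCompact.isCompact
  intro y hy
  have hchoose : ∀ n : ℕ, ∃ z ∈ ⇑A '' Metric.closedBall 0 1,
      dist (y n) z < 1 / (n + 1) := fun n =>
    Metric.mem_closure_iff.1 (hy n) _ (by positivity)
  choose z hz hdz using hchoose
  choose u hu hzu using hz
  have hu1 : ∀ n, ‖u n‖ ≤ 1 := fun n => by
    simpa [Metric.mem_closedBall, dist_zero_right] using hu n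
  obtain ⟨c, φ, hφ, hc⟩ := cpt_subseq hTA hu1
  have hcauchy : CauchySeq (fun n => A (u (φ n))) := by
    rw [Metric.cauchySeq_iff]
    intro ε hε
    obtain ⟨N, hN⟩ := Metric.cauchySeq_iff.1 hc.cauchySeq (ε ^ 2 / 2) (by positivity)
    refine ⟨N, fun m hm n hn => ?_⟩
    have hk := key (u (φ m)) (u (φ n)) (hu1 _) (hu1 _)
    have h := hN m hm n hn
    rw [dist_eq_norm] at h ⊢
    nlinarith [norm_nonneg (A (u (φ m)) - A (u (φ n)))]
  obtain ⟨a, ha⟩ := cauchySeq_tendsto_of_complete hcauchy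
  have hamem : a ∈ closure (⇑A '' Metric.closedBall 0 1) := by
    refine mem_closure_of_tendsto ha (Filter.Eventually.of_forall fun n => ?_)
    exact ⟨u (φ n), hu _, rfl⟩
  refine ⟨a, hamem, φ, hφ, ?_⟩
  have hdist : Tendsto (fun n => dist (A (u (φ n))) (y (φ n))) atTop (𝓝 0) := by
    have hb : ∀ n : ℕ, dist (A (u (φ n))) (y (φ n)) ≤ 1 / (n + 1) := by
      intro n
      rw [dist_comm]
      have := hdz (φ n)
      rw [← hzu (φ n)] at this
      refine this.le.trans ?_
      have hnφ : (n : ℝ) ≤ (φ n : ℝ) := by exact_mod_cast hφ.le_apply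
      apply one_div_le_one_div_of_le (by positivity) (by linarith)
    exact squeeze_zero (fun n => dist_nonneg) hb tendsto_one_div_add_atTop_nhds_zero_nat
  exact ha.congr_dist hdist


theorem isUnit_of_bddBelow (A : H →L[ℂ] H)
    (h1 : ∃ c > 0, ∀ v : H, c * ‖v‖ ≤ ‖A v‖)
    (h2 : ∃ c > 0, ∀ v : H, c * ‖v‖ ≤ ‖ContinuousLinearMap.adjoint A v‖) :
    IsUnit A := by
  obtain ⟨c, hc, hbb⟩ := h1
  obtain ⟨c', hc', hbb'⟩ := h2
  have hinj : A.ker = ⊥ := by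
    rw [LinearMap.ker_eq_bot']
    intro v hv
    have := hbb v
    rw [show A v = 0 from hv, norm_zero] at this
    have : ‖v‖ ≤ 0 := by
      by_contra h
      push_neg at h
      nlinarith
    exact norm_le_zero_iff.1 this
  -- closed range
  have hanti : AntilipschitzWith (⟨c, hc.le⟩ : NNReal)⁻¹ ⇑A := by
    apply A.antilipschitz_of_bound
    intro x
    show ‖x‖ ≤ (c : ℝ)⁻¹ * ‖A x‖
    rw [le_inv_mul_iff₀ hc]
    exact hbb x
  have hclosed : IsClosed (Set.range ⇑A) := hanti.isClosed_range A.uniformContinuous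
  have hrange : A.range = ⊤ := by
    have hcs : IsClosed ((A.range : Submodule ℂ H) : Set H) := by
      have hh : ((A.range : Submodule ℂ H) : Set H) = Set.range ⇑A := by
        ext v; simp [LinearMap.mem_range]
      rw [hh]; exact hclosed
    haveI : CompleteSpace (A.range : Submodule ℂ H) := hcs.completeSpace_coe
    rw [← Submodule.orthogonal_eq_bot_iff]
    rw [Submodule.eq_bot_iff]
    intro x hx
    have hAx : ContinuousLinearMap.adjoint A x = 0 := by
      have h0 : ⟪ContinuousLinearMap.adjoint A x, ContinuousLinearMap.adjoint A x⟫ = 0 := by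
        rw [ContinuousLinearMap.adjoint_inner_right]
        exact (Submodule.mem_orthogonal _ _).1 hx _ ⟨ContinuousLinearMap.adjoint A x, rfl⟩
      exact inner_self_eq_zero.1 h0
    have := hbb' x
    rw [hAx, norm_zero] at this
    have : ‖x‖ ≤ 0 := by nlinarith
    exact norm_le_zero_iff.1 this
  set e := ContinuousLinearEquiv.ofBijective A hinj hrange with he
  refine ⟨⟨A, (e.symm : H →L[ℂ] H), ?_, ?_⟩, rfl⟩
  · ext v
    simp only [ContinuousLinearMap.mul_apply, ContinuousLinearMap.coe_coe,
      ContinuousLinearMap.one_apply]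
    exact ContinuousLinearEquiv.ofBijective_apply_symm_apply A hinj hrange v
  · ext v
    simp only [ContinuousLinearMap.mul_apply, ContinuousLinearMap.coe_coe,
      ContinuousLinearMap.one_apply]
    exact ContinuousLinearEquiv.ofBijective_symm_apply_apply A hinj hrange v


theorem countable_eigen {T : H →L[ℂ] H} (hT : IsCompactOperator ⇑T) :
    {μ : ℂ | μ ≠ 0 ∧ ∃ v : H, v ≠ 0 ∧ T v = μ • v}.Countable := by
  have hsub : {μ : ℂ | μ ≠ 0 ∧ ∃ v : H, v ≠ 0 ∧ T v = μ • v} ⊆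
      ⋃ n : ℕ, {μ : ℂ | 1 / (n + 1) ≤ ‖μ‖ ∧ ∃ v : H, v ≠ 0 ∧ T v = μ • v} := by
    rintro μ ⟨hμ, hv⟩
    obtain ⟨n, hn⟩ := exists_nat_one_div_lt (norm_pos_iff.2 hμ)
    exact Set.mem_iUnion.2 ⟨n, hn.le, hv⟩
  exact Set.Countable.mono hsub
    (Set.countable_iUnion fun n => (finite_eigen hT (by positivity)).countable)


theorem countable_spectrum {T : H →L[ℂ] H} (hT : IsCompactOperator ⇑T) :
    (spectrum ℂ T \ {0}).Countable := by
  set T' := ContinuousLinearMap.adjoint T with hT'def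
  have hT' := adjoint_compact hT
  have hsub : spectrum ℂ T \ {0} ⊆
      {μ : ℂ | μ ≠ 0 ∧ ∃ v : H, v ≠ 0 ∧ T v = μ • v} ∪
      (fun μ : ℂ => starRingEnd ℂ μ) ⁻¹' {μ : ℂ | μ ≠ 0 ∧ ∃ v : H, v ≠ 0 ∧ T' v = μ • v} := by
    rintro μ ⟨hσ, hμ0⟩
    have hμ : μ ≠ 0 := hμ0
    set A : H →L[ℂ] H := T - μ • 1 with hAdef
    have hnu : ¬ IsUnit A := by
      rw [spectrum.mem_iff] at hσ
      intro h
      apply hσ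
      have heq : algebraMap ℂ (H →L[ℂ] H) μ - T = -A := by
        rw [hAdef, Algebra.algebraMap_eq_smul_one, neg_sub]
      rw [heq]
      exact h.neg
    have hadj : ContinuousLinearMap.adjoint A = T' - (starRingEnd ℂ μ) • 1 := by
      rw [hAdef, ← ContinuousLinearMap.star_eq_adjoint, star_sub, star_smul, star_one,
        ContinuousLinearMap.star_eq_adjoint, hT'def]
      rfl
    by_cases hbb1 : ∃ c > 0, ∀ v : H, c * ‖v‖ ≤ ‖A v‖
    · by_cases hbb2 : ∃ c > 0, ∀ v : H, c * ‖v‖ ≤ ‖ContinuousLinearMap.adjoint A v‖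
      · exact absurd (isUnit_of_bddBelow A hbb1 hbb2) hnu
      · right
        have h2 : ¬ ∃ c > 0, ∀ v : H, c * ‖v‖ ≤ ‖T' v - starRingEnd ℂ μ • v‖ := by
          intro ⟨c, hc, hb⟩
          exact hbb2 ⟨c, hc, fun v => by
            rw [hadj]; simpa using hb v⟩
        obtain ⟨v, hv0, hv⟩ := eigen_of_not_bddBelow hT'
          (by simpa using hμ : starRingEnd ℂ μ ≠ 0) h2
        exact ⟨by simpa using hμ, v, hv0, hv⟩
    · left
      have h1 : ¬ ∃ c > 0, ∀ v : H, c * ‖v‖ ≤ ‖T v - μ • v‖ := by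
        intro ⟨c, hc, hb⟩
        exact hbb1 ⟨c, hc, fun v => by rw [hAdef]; simpa using hb v⟩
      obtain ⟨v, hv0, hv⟩ := eigen_of_not_bddBelow hT hμ h1
      exact ⟨hμ, v, hv0, hv⟩
  refine Set.Countable.mono hsub ?_
  exact ((countable_eigen hT).union
    ((countable_eigen hT').preimage (starRingEnd ℂ).injective))


theorem countable_bad {A T : H →L[ℂ] H} (hA : IsUnit A) (hT : IsCompactOperator ⇑T) :
    {z : ℂ | ¬ IsUnit (A + z • T)}.Countable := by
  obtain ⟨u, rfl⟩ := hA
  set S : H →L[ℂ] H := ↑u⁻¹ * T with hS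
  have hScpt : IsCompactOperator ⇑S := by
    have := hT.clm_comp (↑u⁻¹ : H →L[ℂ] H)
    rwa [← ContinuousLinearMap.coe_comp'] at this
  have key : ∀ z : ℂ, (↑u : H →L[ℂ] H) + z • T = ↑u * (1 + z • S) := by
    intro z
    rw [mul_add, mul_one, hS, mul_smul_comm, ← mul_assoc, u.mul_inv, one_mul]
  have hsub : {z : ℂ | ¬ IsUnit ((↑u : H →L[ℂ] H) + z • T)} ⊆
      (fun μ : ℂ => -μ⁻¹) '' (spectrum ℂ S \ {0}) := by
    intro z hz
    simp only [Set.mem_setOf_eq] at hz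
    have hz0 : z ≠ 0 := by rintro rfl; exact hz (by simpa using u.isUnit)
    have hnu : ¬ IsUnit (1 + z • S) := by
      intro h; apply hz; rw [key]; exact (Units.isUnit_units_mul u _).2 h
    have hmem : -z⁻¹ ∈ spectrum ℂ S := by
      rw [spectrum.mem_iff]
      intro h
      apply hnu
      have heq : (1 : H →L[ℂ] H) + z • S
          = algebraMap ℂ (H →L[ℂ] H) (-z) * (algebraMap ℂ (H →L[ℂ] H) (-z⁻¹) - S) := by
        rw [mul_sub, ← map_mul]
        have hzz : (-z) * (-z⁻¹) = 1 := by field_simp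
        rw [hzz, map_one]
        rw [Algebra.algebraMap_eq_smul_one (-z), smul_mul_assoc, one_mul, neg_smul,
          sub_neg_eq_add]
      rw [heq]
      exact ((isUnit_iff_ne_zero.2 (neg_ne_zero.2 hz0)).map (algebraMap ℂ (H →L[ℂ] H))).mul h
    refine ⟨-z⁻¹, ⟨hmem, by simp [hz0]⟩, by simp [inv_neg, inv_inv]⟩
  exact (((countable_spectrum hScpt).image _).mono hsub)


end AuxiliaryCompactSpectrum

open Filter Topology Metric in
/-- If `CZ` is a compact operator for every `Z ∈ 𝔄` and the set
`𝒟 = {Z ∈ 𝔄 : CZ+D invertible}` is nonempty, then `𝒟` is connected. -/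
theorem connected_of_compact
    {H K : Type*} [NormedAddCommGroup H] [InnerProductSpace ℂ H] [CompleteSpace H]
    [NormedAddCommGroup K] [InnerProductSpace ℂ K] [CompleteSpace K]
    (𝔄 : Submodule ℂ (H →L[ℂ] K)) (h𝔄 : IsClosed (𝔄 : Set (H →L[ℂ] K)))
    (C : K →L[ℂ] H) (D : H →L[ℂ] H)
    (hcpt : ∀ Z : 𝔄, IsCompactOperator (C.comp (Z : H →L[ℂ] K)))
    (hne : {Z : ↥𝔄 | IsUnit (C.comp (Z : H →L[ℂ] K) + D)}.Nonempty) :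
    IsConnected {Z : ↥𝔄 | IsUnit (C.comp (Z : H →L[ℂ] K) + D)} := by
  obtain ⟨Z₀, hZ₀⟩ := hne
  apply IsPathConnected.isConnected
  refine ⟨Z₀, hZ₀, ?_⟩
  intro W hW
  set g : ℂ → ↥𝔄 := fun z => Z₀ + z • (W - Z₀) with hg
  have hgcont : Continuous g := by
    apply continuous_const.add
    exact continuous_id.smul continuous_const
  set A : H →L[ℂ] H := C.comp (Z₀ : H →L[ℂ] K) + D with hA
  set T : H →L[ℂ] H := C.comp ((W : H →L[ℂ] K) - (Z₀ : H →L[ℂ] K)) with hT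
  have hTcpt : IsCompactOperator ⇑T := by
    have h1 := hcpt W
    have h2 := hcpt Z₀
    have h3 : IsCompactOperator (⇑(C.comp (W : H →L[ℂ] K)) - ⇑(C.comp (Z₀ : H →L[ℂ] K))) :=
      h1.sub h2
    have h4 : ⇑T = ⇑(C.comp (W : H →L[ℂ] K)) - ⇑(C.comp (Z₀ : H →L[ℂ] K)) := by
      rw [hT, ContinuousLinearMap.comp_sub, ContinuousLinearMap.coe_sub']
    rwa [h4]
  have hkey : ∀ z : ℂ, C.comp ((g z : ↥𝔄) : H →L[ℂ] K) + D = A + z • T := by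
    intro z
    have hcoe : ((g z : ↥𝔄) : H →L[ℂ] K)
        = (Z₀ : H →L[ℂ] K) + z • ((W : H →L[ℂ] K) - (Z₀ : H →L[ℂ] K)) := by
      simp [hg]
    rw [hcoe, ContinuousLinearMap.comp_add, ContinuousLinearMap.comp_smulₛₗ]
    rw [hA, hT]
    simp only [RingHom.id_apply]
    abel
  have hbad : {z : ℂ | ¬ IsUnit (A + z • T)}.Countable := countable_bad hZ₀ hTcpt
  have hpath : IsPathConnected ({z : ℂ | ¬ IsUnit (A + z • T)}ᶜ) :=
    hbad.isPathConnected_compl_of_one_lt_rank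
      (by rw [Complex.rank_real_complex]; norm_num)
  have h0 : (0 : ℂ) ∈ {z : ℂ | ¬ IsUnit (A + z • T)}ᶜ := by
    simp only [Set.mem_compl_iff, Set.mem_setOf_eq, not_not, zero_smul, add_zero]
    exact hZ₀
  have h1 : (1 : ℂ) ∈ {z : ℂ | ¬ IsUnit (A + z • T)}ᶜ := by
    simp only [Set.mem_compl_iff, Set.mem_setOf_eq, not_not, one_smul]
    have : A + T = C.comp (W : H →L[ℂ] K) + D := by
      rw [hA, hT, ContinuousLinearMap.comp_sub]
      abel
    rw [this]
    exact hW
  obtain ⟨γ, hγ⟩ := hpath.joinedIn 0 h0 1 h1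
  have hjoin : JoinedIn {Z : ↥𝔄 | IsUnit (C.comp (Z : H →L[ℂ] K) + D)} (g 0) (g 1) := by
    refine ⟨γ.map hgcont, fun t => ?_⟩
    simp only [Path.map_coe, Function.comp_apply, Set.mem_setOf_eq]
    rw [hkey (γ t)]
    exact not_not.1 (hγ t)
  have hg0 : g 0 = Z₀ := by simp [hg]
  have hg1 : g 1 = W := by simp [hg]
  rwa [hg0, hg1] at hjoin
end

section
/- Let C₁, C₂ ∈ ℒ(K,H), D₁, D₂ ∈ ℒ(H), and put 𝒟ᵢ = {Z ∈ ℒ(H,K) : CᵢZ+Dᵢ is invertible} for i = 1, 2. Suppose there exists an invertible R ∈ ℒ(K) with C₂ = C₁R. Then for each Z₁ ∈ 𝒟₁ and Z₂ ∈ 𝒟₂, the affine map φ(Z) = Z₂ + R⁻¹(Z−Z₁)(C₁Z₁+D₁)⁻¹(C₂Z₂+D₂) is a bijection of 𝒟₁ onto 𝒟₂ with affine inverse, and φ(Z₁) = Z₂. -/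
open ContinuousLinearMap Set

set_option synthInstance.maxHeartbeats 1000000
set_option maxHeartbeats 1000000

/-- If `C₂ = C₁R` with `R` invertible, then for any `Z₁ ∈ 𝒟₁` and `Z₂ ∈ 𝒟₂` the affine map
`φ(Z) = Z₂ + R⁻¹(Z−Z₁)(C₁Z₁+D₁)⁻¹(C₂Z₂+D₂)` is a bijection of `𝒟₁` onto `𝒟₂` with affine
inverse, and `φ(Z₁) = Z₂`. -/
theorem affine_equiv_of_domains
    {H K : Type*} [NormedAddCommGroup H] [InnerProductSpace ℂ H] [CompleteSpace H]
    [NormedAddCommGroup K] [InnerProductSpace ℂ K] [CompleteSpace K]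
    (C₁ C₂ : K →L[ℂ] H) (D₁ D₂ : H →L[ℂ] H)
    (𝒟₁ 𝒟₂ : Set (H →L[ℂ] K))
    (h𝒟₁ : 𝒟₁ = {Z : H →L[ℂ] K | IsUnit (C₁.comp Z + D₁)})
    (h𝒟₂ : 𝒟₂ = {Z : H →L[ℂ] K | IsUnit (C₂.comp Z + D₂)})
    (R : K →L[ℂ] K) (hR : IsUnit R) (hC : C₂ = C₁.comp R)
    (Z₁ : H →L[ℂ] K) (hZ₁ : Z₁ ∈ 𝒟₁) (Z₂ : H →L[ℂ] K) (hZ₂ : Z₂ ∈ 𝒟₂)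
    (φ : (H →L[ℂ] K) → (H →L[ℂ] K))
    (hφ : ∀ Z, φ Z = Z₂ + ((Ring.inverse R).comp (Z - Z₁)).comp
      ((Ring.inverse (C₁.comp Z₁ + D₁)).comp (C₂.comp Z₂ + D₂))) :
    Set.BijOn φ 𝒟₁ 𝒟₂ ∧ φ Z₁ = Z₂ ∧
      ∃ (A : K →L[ℂ] K) (B : H →L[ℂ] H) (ψ : (H →L[ℂ] K) → (H →L[ℂ] K)),
        (∀ Z, ψ Z = Z₁ + (A.comp (Z - Z₂)).comp B) ∧
        (∀ Z ∈ 𝒟₁, ψ (φ Z) = Z) ∧ (∀ W ∈ 𝒟₂, φ (ψ W) = W) := by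
  have hM₁ : IsUnit (C₁.comp Z₁ + D₁) := by rw [h𝒟₁] at hZ₁; exact hZ₁
  have hM₂ : IsUnit (C₂.comp Z₂ + D₂) := by rw [h𝒟₂] at hZ₂; exact hZ₂
  set M₁ := C₁.comp Z₁ + D₁ with hM₁def
  set M₂ := C₂.comp Z₂ + D₂ with hM₂def
  set N := (Ring.inverse M₁).comp M₂ with hNdef
  set P := (Ring.inverse M₂).comp M₁ with hPdef
  have hRr : R.comp (Ring.inverse R) = ContinuousLinearMap.id ℂ K := by
    rw [← mul_def, Ring.mul_inverse_cancel _ hR, one_def]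
  have hRl : (Ring.inverse R).comp R = ContinuousLinearMap.id ℂ K := by
    rw [← mul_def, Ring.inverse_mul_cancel _ hR, one_def]
  have hM₁r : M₁.comp (Ring.inverse M₁) = ContinuousLinearMap.id ℂ H := by
    rw [← mul_def, Ring.mul_inverse_cancel _ hM₁, one_def]
  have hM₁l : (Ring.inverse M₁).comp M₁ = ContinuousLinearMap.id ℂ H := by
    rw [← mul_def, Ring.inverse_mul_cancel _ hM₁, one_def]
  have hM₂r : M₂.comp (Ring.inverse M₂) = ContinuousLinearMap.id ℂ H := by
    rw [← mul_def, Ring.mul_inverse_cancel _ hM₂, one_def]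
  have hM₂l : (Ring.inverse M₂).comp M₂ = ContinuousLinearMap.id ℂ H := by
    rw [← mul_def, Ring.inverse_mul_cancel _ hM₂, one_def]
  -- right-associated cancellation lemmas
  have cRr : ∀ (X : H →L[ℂ] K), R.comp ((Ring.inverse R).comp X) = X := fun X => by
    rw [← comp_assoc, hRr, id_comp]
  have cRl : ∀ (X : H →L[ℂ] K), (Ring.inverse R).comp (R.comp X) = X := fun X => by
    rw [← comp_assoc, hRl, id_comp]
  have hNP : N.comp P = ContinuousLinearMap.id ℂ H := by
    rw [hNdef, hPdef, comp_assoc, ← comp_assoc M₂, hM₂r, id_comp, hM₁l]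
  have hPN : P.comp N = ContinuousLinearMap.id ℂ H := by
    rw [hNdef, hPdef, comp_assoc, ← comp_assoc M₁, hM₁r, id_comp, hM₂l]
  have hMN : M₁.comp N = M₂ := by rw [hNdef, ← comp_assoc, hM₁r, id_comp]
  have hMP : M₂.comp P = M₁ := by rw [hPdef, ← comp_assoc, hM₂r, id_comp]
  set ψ : (H →L[ℂ] K) → (H →L[ℂ] K) :=
    fun W => Z₁ + (R.comp (W - Z₂)).comp P with hψ
  have key₁ : ∀ Z, C₂.comp (φ Z) + D₂ = (C₁.comp Z + D₁).comp N := by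
    intro Z
    rw [hφ]
    have expand : C₂.comp (Z₂ + ((Ring.inverse R).comp (Z - Z₁)).comp N) + D₂
        = M₂ + (C₁.comp Z).comp N - (C₁.comp Z₁).comp N := by
      rw [comp_add]
      rw [show C₂.comp (((Ring.inverse R).comp (Z - Z₁)).comp N)
          = (C₁.comp Z).comp N - (C₁.comp Z₁).comp N by
        rw [hC]
        simp only [comp_assoc]
        rw [cRr, sub_comp, comp_sub]]
      rw [hM₂def]
      abel
    rw [expand, ← hMN, hM₁def, add_comp, add_comp]
    abel
  have key₂ : ∀ W, C₁.comp (ψ W) + D₁ = (C₂.comp W + D₂).comp P := by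
    intro W
    have expand : C₁.comp (Z₁ + (R.comp (W - Z₂)).comp P) + D₁
        = M₁ + (C₂.comp W).comp P - (C₂.comp Z₂).comp P := by
      rw [comp_add]
      rw [show C₁.comp ((R.comp (W - Z₂)).comp P)
          = (C₂.comp W).comp P - (C₂.comp Z₂).comp P by
        rw [hC]
        simp only [comp_assoc]
        rw [sub_comp, comp_sub, comp_sub]]
      rw [hM₁def]
      abel
    rw [hψ]
    simp only []
    rw [expand, ← hMP, hM₂def, add_comp, add_comp]
    abel
  have left : ∀ Z, ψ (φ Z) = Z := by
    intro Z
    rw [hψ]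
    simp only [hφ, add_sub_cancel_left]
    simp only [comp_assoc]
    rw [hNP, comp_id, cRr]
    abel
  have right : ∀ W, φ (ψ W) = W := by
    intro W
    rw [hφ]
    simp only [hψ, add_sub_cancel_left]
    simp only [comp_assoc]
    rw [hPN, comp_id, cRl]
    abel
  have hφZ₁ : φ Z₁ = Z₂ := by rw [hφ]; simp
  have hNu : IsUnit N := by
    rw [hNdef, ← mul_def]; exact (isUnit_ringInverse.mpr hM₁).mul hM₂
  have hPu : IsUnit P := by
    rw [hPdef, ← mul_def]; exact (isUnit_ringInverse.mpr hM₂).mul hM₁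
  have maps₁ : Set.MapsTo φ 𝒟₁ 𝒟₂ := by
    intro Z hZ
    rw [h𝒟₂]
    show IsUnit (C₂.comp (φ Z) + D₂)
    rw [key₁, ← mul_def]
    exact (by rw [h𝒟₁] at hZ; exact hZ : IsUnit (C₁.comp Z + D₁)).mul hNu
  have maps₂ : ∀ W ∈ 𝒟₂, ψ W ∈ 𝒟₁ := by
    intro W hW
    rw [h𝒟₁]
    show IsUnit (C₁.comp (ψ W) + D₁)
    rw [key₂, ← mul_def]
    exact (by rw [h𝒟₂] at hW; exact hW : IsUnit (C₂.comp W + D₂)).mul hPu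
  refine ⟨⟨maps₁, ?_, ?_⟩, hφZ₁, R, P, ψ, fun Z => rfl, fun Z _ => left Z,
    fun W _ => right W⟩
  · intro a _ b _ hab
    rw [← left a, ← left b, hab]
  · intro W hW
    exact ⟨ψ W, maps₂ W hW, right W⟩
end

section
/- Let J ∈ ℒ(H) be self-adjoint and suppose 1 and −1 are eigenvalues of J. Put 𝒟 = {z ∈ H : ⟨Jz, z⟩ < 0}. Then the group of invertible bounded linear maps of H preserving 𝒟 acts transitively on 𝒟: for all z, w ∈ 𝒟 there exists an invertible bounded linear map L : H → H with L(𝒟) = 𝒟 and L(z) = w. -/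
open Set

set_option synthInstance.maxHeartbeats 1000000
set_option maxHeartbeats 1000000

/-- If `J` is self-adjoint with eigenvalues `1` and `−1`, then the group of invertible bounded
linear maps preserving `𝒟 = {z : ⟨Jz,z⟩ < 0}` acts transitively on `𝒟`. -/
theorem transitive_linear_group_of_hyperbolic_domain
    {H : Type*} [NormedAddCommGroup H] [InnerProductSpace ℂ H] [CompleteSpace H]
    (J : H →L[ℂ] H) (hJ : IsSelfAdjoint J)
    (e : H) (he : e ≠ 0) (hJe : J e = e)
    (f : H) (hf : f ≠ 0) (hJf : J f = -f)
    (𝒟 : Set H) (h𝒟 : 𝒟 = {z : H | (inner ℂ (J z) z : ℂ).re < 0})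
    (z : H) (hz : z ∈ 𝒟) (w : H) (hw : w ∈ 𝒟) :
    ∃ L : H ≃L[ℂ] H, L '' 𝒟 = 𝒟 ∧ L z = w := by
  classical
  subst h𝒟
  simp only [Set.mem_setOf_eq] at hz hw
  -- symmetry facts
  have hsym : ∀ x y : H, (inner ℂ (J x) y : ℂ) = inner ℂ x (J y) := fun x y => by
    rw [← hJ.adjoint_eq, ContinuousLinearMap.adjoint_inner_left, hJ.adjoint_eq]
  have hconj : ∀ x y : H, (starRingEnd ℂ) (inner ℂ (J x) y) = inner ℂ (J y) x := fun x y => by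
    rw [hsym x y, inner_conj_symm]
  set a : ℂ := inner ℂ (J z) z with ha
  set b : ℂ := inner ℂ (J w) w with hb
  have haR : (a.re : ℂ) = a := Complex.conj_eq_iff_re.mp (hconj z z)
  have hbR : (b.re : ℂ) = b := Complex.conj_eq_iff_re.mp (hconj w w)
  have ha0 : a ≠ 0 := fun h => by rw [h] at hz; simp at hz
  have hb0 : b ≠ 0 := fun h => by rw [h] at hw; simp at hw
  set c0 : ℂ := inner ℂ (J z) w with hc0
  set r : ℝ := Real.sqrt (a.re / b.re) with hr
  have hdivpos : 0 < a.re / b.re := div_pos_iff.mpr (Or.inr ⟨hz, hw⟩)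
  have hrpos : 0 < r := Real.sqrt_pos.mpr hdivpos
  have hr2 : (r : ℝ) ^ 2 = a.re / b.re := Real.sq_sqrt hdivpos.le
  set n : ℝ := ‖c0‖ with hn
  have hc0norm : (starRingEnd ℂ) c0 * c0 = ((n : ℂ)) ^ 2 := by
    rw [hn]
    simp [Complex.conj_mul']
  set lam0 : ℂ := if c0 = 0 then (r : ℂ) else (r : ℂ) * (starRingEnd ℂ) c0 / (n : ℂ) with hlam0
  have hlam0_ne : lam0 ≠ 0 := by
    rw [hlam0]
    split_ifs with h
    · exact_mod_cast ne_of_gt hrpos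
    · refine div_ne_zero (mul_ne_zero ?_ ?_) ?_
      · exact_mod_cast ne_of_gt hrpos
      · simpa using h
      · rw [hn]; simpa [Complex.ofReal_eq_zero, norm_eq_zero] using h
  have hlam0_norm : (starRingEnd ℂ) lam0 * lam0 = ((r : ℂ)) ^ 2 := by
    rw [hlam0]
    split_ifs with h
    · simp [sq, Complex.conj_ofReal]
    · have hn0 : (n : ℂ) ≠ 0 := by rw [hn]; simpa [Complex.ofReal_eq_zero, norm_eq_zero] using h
      rw [map_div₀, map_mul, Complex.conj_ofReal, Complex.conj_conj, Complex.conj_ofReal]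
      field_simp
      linear_combination ((r:ℂ))^2 * hc0norm
  have hlam0c0 : lam0 * c0 = ((r * n : ℝ) : ℂ) := by
    rw [hlam0]
    split_ifs with h
    · rw [h, mul_zero, hn, h, norm_zero, mul_zero, Complex.ofReal_zero]
    · have hn0 : (n : ℂ) ≠ 0 := by rw [hn]; simpa [Complex.ofReal_eq_zero, norm_eq_zero] using h
      push_cast
      field_simp
      linear_combination (r:ℂ) * hc0norm
  set lam : ℂ := if a = lam0 * c0 then -lam0 else lam0 with hlam
  have hlam_ne : lam ≠ 0 := by
    rw [hlam]; split_ifs <;> simpa using hlam0_ne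
  have hlam_norm : (starRingEnd ℂ) lam * lam = ((r : ℂ)) ^ 2 := by
    rw [hlam]; split_ifs <;> simp [hlam0_norm]
  have htau : (starRingEnd ℂ) (lam * c0) = lam * c0 := by
    rw [hlam]; split_ifs
    · rw [neg_mul, map_neg, hlam0c0, Complex.conj_ofReal]
    · rw [hlam0c0, Complex.conj_ofReal]
  have hane : a ≠ lam * c0 := by
    rw [hlam]
    split_ifs with h
    · rw [neg_mul, ← h]
      intro hh
      have : a + a = 0 := by linear_combination hh
      simp only [← two_mul, mul_eq_zero] at this
      rcases this with h2 | h2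
      · norm_num at h2
      · exact ha0 h2
    · exact h
  have hr2b : ((r : ℂ)) ^ 2 * b = a := by
    have hbre : ((b.re : ℝ) : ℂ) ≠ 0 := by exact_mod_cast (ne_of_lt hw)
    rw [← haR, ← hbR, show ((r:ℂ))^2 = ((r^2:ℝ):ℂ) from by push_cast; ring, hr2]
    push_cast
    field_simp
  set v : H := z - lam • w with hv
  set g : ℂ := 2 * (a - lam * c0) with hg
  have hg_ne : g ≠ 0 := by
    rw [hg]
    exact mul_ne_zero two_ne_zero (sub_ne_zero.mpr hane)
  have hg_conj : (starRingEnd ℂ) g = g := by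
    rw [hg, map_mul, map_sub, hconj z z, htau, map_ofNat]
  have hBwz : (inner ℂ (J w) z : ℂ) = (starRingEnd ℂ) c0 := by
    rw [← hconj z w]
  have hBvz : (inner ℂ (J v) z : ℂ) = a - lam * c0 := by
    rw [hv]
    rw [map_sub, map_smul, inner_sub_left, inner_smul_left, hBwz, ← map_mul, htau]
  have hBvw : (inner ℂ (J v) w : ℂ) = c0 - (starRingEnd ℂ) lam * b := by
    rw [hv, map_sub, map_smul, inner_sub_left, inner_smul_left]
  have hBvv : (inner ℂ (J v) v : ℂ) = g := by
    rw [hv, inner_sub_right, inner_smul_right, hBvz, hBvw, hg]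
    have : lam * ((starRingEnd ℂ) lam * b) = ((r:ℂ))^2 * b := by
      rw [← mul_assoc, mul_comm lam, hlam_norm]
    rw [mul_sub, this, hr2b]
    ring
  -- the reflection
  set Rl : H →L[ℂ] H :=
    ContinuousLinearMap.id ℂ H - (2 / g) • ((innerSL ℂ (J v)).smulRight v) with hRl
  have hRl_apply : ∀ u : H, Rl u = u - ((2 / g) * inner ℂ (J v) u) • v := by
    intro u
    simp [hRl, ContinuousLinearMap.smul_apply, ContinuousLinearMap.smulRight_apply,
      innerSL_apply_apply, smul_smul]
  have hBvR : ∀ u : H, (inner ℂ (J v) (Rl u) : ℂ) = -(inner ℂ (J v) u : ℂ) := by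
    intro u
    rw [hRl_apply, inner_sub_right, inner_smul_right, hBvv]
    field_simp
    ring
  have hRR : ∀ u : H, Rl (Rl u) = u := by
    intro u
    rw [hRl_apply (Rl u), hBvR, hRl_apply u]
    rw [mul_neg, neg_smul, sub_neg_eq_add]
    abel
  have hJquad : ∀ u : H, (inner ℂ (J (Rl u)) (Rl u) : ℂ) = inner ℂ (J u) u := by
    intro u
    set d : ℂ := inner ℂ (J v) u with hd
    have hconjd : (inner ℂ (J u) v : ℂ) = (starRingEnd ℂ) d := by rw [hd, ← hconj v u]
    rw [hRl_apply u, map_sub, map_smul, inner_sub_left, inner_sub_right, inner_sub_right,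
      inner_smul_left, inner_smul_right, inner_smul_left, inner_smul_right,
      hBvv, hconjd, ← hd, map_mul, map_div₀, map_ofNat, hg_conj]
    field_simp
    ring
  -- the equivalence
  have hinv1 : ∀ x : H, (lam • Rl) ((lam⁻¹ • Rl) x) = x := by
    intro x
    simp only [ContinuousLinearMap.smul_apply, map_smul, hRR, smul_smul]
    rw [inv_mul_cancel₀ hlam_ne, one_smul]
  have hinv2 : ∀ x : H, (lam⁻¹ • Rl) ((lam • Rl) x) = x := by
    intro x
    simp only [ContinuousLinearMap.smul_apply, map_smul, hRR, smul_smul]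
    rw [mul_inv_cancel₀ hlam_ne, one_smul]
  set L : H ≃L[ℂ] H := ContinuousLinearEquiv.equivOfInverse (lam⁻¹ • Rl) (lam • Rl) hinv1 hinv2
    with hL
  have hL_apply : ∀ u : H, L u = lam⁻¹ • Rl u := fun u => rfl
  have hLz : L z = w := by
    rw [hL_apply, hRl_apply, hBvz]
    have h1 : 2 / g * (a - lam * c0) = 1 := by
      rw [hg]; field_simp
    rw [h1, one_smul, hv, sub_sub_cancel, smul_smul, inv_mul_cancel₀ hlam_ne, one_smul]
  have hquadL : ∀ u : H,
      (inner ℂ (J (L u)) (L u) : ℂ) = ((r : ℂ) ^ 2)⁻¹ * inner ℂ (J u) u := by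
    intro u
    rw [hL_apply, map_smul, inner_smul_left, inner_smul_right, hJquad, ← mul_assoc]
    congr 1
    rw [map_inv₀, ← mul_inv, hlam_norm]
  have hmem : ∀ u : H, ((inner ℂ (J (L u)) (L u) : ℂ).re < 0 ↔ (inner ℂ (J u) u : ℂ).re < 0) := by
    intro u
    rw [hquadL]
    have hcast : ((r : ℂ) ^ 2)⁻¹ = (((r ^ 2)⁻¹ : ℝ) : ℂ) := by push_cast; ring
    rw [hcast, Complex.re_ofReal_mul]
    have hrpos2 : (0:ℝ) < (r ^ 2)⁻¹ := by positivity
    constructor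
    · intro h
      by_contra hcon
      push_neg at hcon
      exact absurd h (not_lt.mpr (mul_nonneg hrpos2.le hcon))
    · intro h; exact mul_neg_of_pos_of_neg hrpos2 h
  refine ⟨L, ?_, hLz⟩
  ext x
  simp only [Set.mem_image, Set.mem_setOf_eq]
  constructor
  · rintro ⟨u, hu, rfl⟩
    exact (hmem u).mpr hu
  · intro hx
    refine ⟨L.symm x, ?_, L.apply_symm_apply x⟩
    have := (hmem (L.symm x))
    rw [L.apply_symm_apply] at this
    exact this.mp hx
end
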